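/- Let G = (V,E) and let X, Y be disjoint vertex subsets such that every x ∈ X has at least |X|/2 neighbors in X and every y ∈ Y has at least |Y|/2 neighbors in Y, and suppose X and Y are not highly connected (i.e., some x ∈ X has fewer than |Y|/2 neighbors in Y, or some y ∈ Y has fewer than |X|/2 neighbors in X). Then the number of edges between X and Y is at most 4 times the number of bad triangles of the form (x,x',y) with x,x' ∈ X, y ∈ Y, (x,x'),(x,y) ∈ E, (x',y) ∉ E, plus those of the form (x,y,y') with x ∈ X, y,y' ∈ Y, (y,y'),(x,y) ∈ E, (x,y') ∉ E. -/
import Mathlib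

open Finset

private lemma card_filter_prod {α β : Type*} (s : Finset α) (t : Finset β)
    (p : α × β → Prop) [DecidablePred p] :
    ((s ×ˢ t).filter p).card = ∑ a ∈ s, (t.filter (fun b => p (a, b))).card := by
  rw [Finset.card_filter, Finset.sum_product]
  exact Finset.sum_congr rfl fun a _ => (Finset.card_filter _ _).symm

private lemma card_filter_prod' {α β : Type*} (s : Finset α) (t : Finset β)
    (p : α × β → Prop) [DecidablePred p] :
    ((s ×ˢ t).filter p).card = ∑ b ∈ t, (s.filter (fun a => p (a, b))).card := by
  rw [Finset.card_filter, Finset.sum_product_right]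
  exact Finset.sum_congr rfl fun b _ => (Finset.card_filter _ _).symm

private lemma cross_bound {V : Type*} [DecidableEq V] (G : SimpleGraph V) [DecidableRel G.Adj]
    (W S : Finset V) (hSW : S ⊆ W) (hne : (W \ S).Nonempty)
    (hdeg : ∀ y ∈ W, (W.card : ℝ) / 2 ≤ ((W.filter (fun z => G.Adj y z)).card : ℝ)) :
    (S.card : ℝ) ≤ 2 * (((S ×ˢ (W \ S)).filter (fun p => G.Adj p.1 p.2)).card : ℝ) := by
  have hn : (W \ S).card + S.card = W.card := Finset.card_sdiff_add_card_eq_card hSW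
  -- split of degree
  have hsplit : ∀ y, (W.filter (fun z => G.Adj y z)).card
      = (S.filter (fun z => G.Adj y z)).card + ((W \ S).filter (fun z => G.Adj y z)).card := by
    intro y
    rw [← Finset.card_union_of_disjoint (Finset.disjoint_filter_filter Finset.disjoint_sdiff),
      ← Finset.filter_union, Finset.union_sdiff_of_subset hSW]
  have he1 : (((S ×ˢ (W \ S)).filter (fun p => G.Adj p.1 p.2)).card)
      = ∑ y ∈ S, ((W \ S).filter (fun z => G.Adj y z)).card :=
    card_filter_prod _ _ _
  have he2 : (((S ×ˢ (W \ S)).filter (fun p => G.Adj p.1 p.2)).card)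
      = ∑ z ∈ W \ S, (S.filter (fun y => G.Adj y z)).card :=
    card_filter_prod' _ _ _
  rcases le_or_gt (2 * S.card) W.card with h | h
  · -- each row at least 1
    have hrow : ∀ y ∈ S, 1 ≤ ((W \ S).filter (fun z => G.Adj y z)).card := by
      intro y hy
      have hyW : y ∈ W := hSW hy
      have h1 : (S.filter (fun z => G.Adj y z)).card ≤ S.card - 1 := by
        have hsub : S.filter (fun z => G.Adj y z) ⊆ S.erase y := by
          intro z hz
          rw [Finset.mem_filter] at hz
          refine Finset.mem_erase.2 ⟨?_, hz.1⟩
          rintro rfl; exact G.irrefl hz.2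
        simpa [Finset.card_erase_of_mem hy] using Finset.card_le_card hsub
      have hd := hdeg y hyW
      have hS1 : 1 ≤ S.card := Finset.card_pos.2 ⟨y, hy⟩
      have := hsplit y
      -- real arithmetic
      have h1' : ((S.filter (fun z => G.Adj y z)).card : ℝ) ≤ (S.card : ℝ) - 1 := by
        have := (Nat.cast_le (α := ℝ)).2 h1
        push_cast [Nat.cast_sub hS1] at this ⊢
        linarith
      have hWn : ((W.filter (fun z => G.Adj y z)).card : ℝ)
          = ((S.filter (fun z => G.Adj y z)).card : ℝ)
            + (((W \ S).filter (fun z => G.Adj y z)).card : ℝ) := by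
        exact_mod_cast congrArg (Nat.cast (R := ℝ)) (hsplit y)
      have hval : (1 : ℝ) ≤ (((W \ S).filter (fun z => G.Adj y z)).card : ℝ) := by
        have hcs : (2 * S.card : ℝ) ≤ (W.card : ℝ) := by exact_mod_cast h
        linarith
      exact_mod_cast hval
    have : S.card ≤ ((S ×ˢ (W \ S)).filter (fun p => G.Adj p.1 p.2)).card := by
      rw [he1]
      calc S.card = ∑ _y ∈ S, 1 := by simp
        _ ≤ _ := Finset.sum_le_sum hrow
    have h0 : (0:ℝ) ≤ (((S ×ˢ (W \ S)).filter (fun p => G.Adj p.1 p.2)).card : ℝ) := by positivity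
    have := (Nat.cast_le (α := ℝ)).2 this
    linarith
  · -- t < n/2 side
    have ht1 : 1 ≤ (W \ S).card := Finset.card_pos.2 hne
    have hcol : ∀ z ∈ W \ S,
        ((W.card : ℝ) / 2 - ((W \ S).card : ℝ) + 1) ≤ ((S.filter (fun y => G.Adj y z)).card : ℝ) := by
      intro z hz
      have hzW : z ∈ W := (Finset.mem_sdiff.1 hz).1
      have hcongr : S.filter (fun y => G.Adj y z) = S.filter (fun y => G.Adj z y) := by
        apply Finset.filter_congr
        intro y _; constructor <;> (intro h'; exact h'.symm)
      have h1 : ((W \ S).filter (fun y => G.Adj z y)).card ≤ (W \ S).card - 1 := by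
        have hsub : (W \ S).filter (fun y => G.Adj z y) ⊆ (W \ S).erase z := by
          intro y hy
          rw [Finset.mem_filter] at hy
          refine Finset.mem_erase.2 ⟨?_, hy.1⟩
          rintro rfl; exact G.irrefl hy.2
        simpa [Finset.card_erase_of_mem hz] using Finset.card_le_card hsub
      have h1' : (((W \ S).filter (fun y => G.Adj z y)).card : ℝ) ≤ ((W \ S).card : ℝ) - 1 := by
        have := (Nat.cast_le (α := ℝ)).2 h1
        push_cast [Nat.cast_sub ht1] at this ⊢
        linarith
      have hWn : ((W.filter (fun y => G.Adj z y)).card : ℝ)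
          = ((S.filter (fun y => G.Adj z y)).card : ℝ)
            + (((W \ S).filter (fun y => G.Adj z y)).card : ℝ) := by
        exact_mod_cast congrArg (Nat.cast (R := ℝ)) (hsplit z)
      have hd := hdeg z hzW
      rw [hcongr]
      linarith
    have hsum : (((W \ S).card : ℝ)) * ((W.card : ℝ) / 2 - ((W \ S).card : ℝ) + 1)
        ≤ (((S ×ˢ (W \ S)).filter (fun p => G.Adj p.1 p.2)).card : ℝ) := by
      rw [he2]
      push_cast
      calc ((W \ S).card : ℝ) * ((W.card : ℝ) / 2 - ((W \ S).card : ℝ) + 1)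
          = ∑ _z ∈ W \ S, ((W.card : ℝ) / 2 - ((W \ S).card : ℝ) + 1) := by
            rw [Finset.sum_const, nsmul_eq_mul]
        _ ≤ ∑ z ∈ W \ S, ((S.filter (fun y => G.Adj y z)).card : ℝ) := Finset.sum_le_sum hcol
    have ht1' : (1:ℝ) ≤ ((W \ S).card : ℝ) := by exact_mod_cast ht1
    have hh : ((W.card : ℝ)) < 2 * (S.card : ℝ) := by exact_mod_cast h
    have hn' : ((W \ S).card : ℝ) + (S.card : ℝ) = (W.card : ℝ) := by exact_mod_cast hn
    nlinarith [mul_nonneg (sub_nonneg.2 ht1') (by linarith : (0:ℝ) ≤ (W.card : ℝ) - 2 * ((W \ S).card : ℝ))]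

private lemma core {V : Type*} [DecidableEq V] (G : SimpleGraph V) [DecidableRel G.Adj]
    (A B : Finset V)
    (hA : ∀ x ∈ A, ((A.card : ℝ) / 2 ≤ ((A.filter (fun z => G.Adj x z)).card : ℝ)))
    (hB : ∀ y ∈ B, ((B.card : ℝ) / 2 ≤ ((B.filter (fun z => G.Adj y z)).card : ℝ)))
    (hbad : ∃ b ∈ B, ((A.filter (fun x => G.Adj b x)).card : ℝ) < (A.card : ℝ) / 2) :
    ((((A ×ˢ B).filter (fun p => G.Adj p.1 p.2)).card : ℝ)) ≤
      2 * ∑ b ∈ B, (((A ×ˢ A).filter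
            (fun q => G.Adj q.1 q.2 ∧ G.Adj q.1 b ∧ ¬ G.Adj q.2 b)).card : ℝ)
      + 4 * ∑ a ∈ A, (((B ×ˢ B).filter
            (fun q => G.Adj q.1 q.2 ∧ G.Adj a q.1 ∧ ¬ G.Adj a q.2)).card : ℝ) := by
  classical
  obtain ⟨b₀, hb₀B, hb₀⟩ := hbad
  set F : Finset V := A.filter (fun a => ∀ b ∈ B, G.Adj a b) with hF
  set Gs : Finset V := B.filter (fun b => ∀ a ∈ A, G.Adj b a) with hGs
  -- F is small
  have hFsub : F ⊆ A.filter (fun x => G.Adj b₀ x) := by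
    intro x hx
    rw [hF, Finset.mem_filter] at hx
    exact Finset.mem_filter.2 ⟨hx.1, (hx.2 b₀ hb₀B).symm⟩
  have hFA : F ⊆ A := Finset.filter_subset _ _
  have hFsmall : (F.card : ℝ) < (A.card : ℝ) / 2 :=
    lt_of_le_of_lt (by exact_mod_cast Finset.card_le_card hFsub) hb₀
  have hAF : (A \ F).card + F.card = A.card := Finset.card_sdiff_add_card_eq_card hFA
  have hAF' : (A.card : ℝ) ≤ 2 * ((A \ F).card : ℝ) := by
    have : ((A \ F).card : ℝ) + (F.card : ℝ) = (A.card : ℝ) := by exact_mod_cast hAF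
    linarith
  -- edges as sum over B
  have hm : (((A ×ˢ B).filter (fun p => G.Adj p.1 p.2)).card)
      = ∑ b ∈ B, (A.filter (fun a => G.Adj a b)).card := card_filter_prod' _ _ _
  -- bound for b outside Gs
  have hbound1 : ∀ b ∈ B \ Gs, ((A.filter (fun a => G.Adj a b)).card : ℝ)
      ≤ 2 * (((A ×ˢ A).filter
          (fun q => G.Adj q.1 q.2 ∧ G.Adj q.1 b ∧ ¬ G.Adj q.2 b)).card : ℝ) := by
    intro b hb
    obtain ⟨hbB, hbn⟩ := Finset.mem_sdiff.1 hb
    set Sb : Finset V := A.filter (fun z => G.Adj b z) with hSb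
    have hSbA : Sb ⊆ A := Finset.filter_subset _ _
    have hne : (A \ Sb).Nonempty := by
      rw [hGs, Finset.mem_filter] at hbn
      push_neg at hbn
      obtain ⟨a, haA, hna⟩ := hbn hbB
      exact ⟨a, Finset.mem_sdiff.2 ⟨haA, fun hc => hna (Finset.mem_filter.1 hc).2⟩⟩
    have hcross := cross_bound G A Sb hSbA hne hA
    have heq : (A.filter (fun a => G.Adj a b)).card = Sb.card := by
      rw [hSb]
      congr 1
      apply Finset.filter_congr
      intro a _; constructor <;> (intro h'; exact h'.symm)
    have hsub : ((Sb ×ˢ (A \ Sb)).filter (fun p => G.Adj p.1 p.2))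
        ⊆ ((A ×ˢ A).filter (fun q => G.Adj q.1 q.2 ∧ G.Adj q.1 b ∧ ¬ G.Adj q.2 b)) := by
      intro p hp
      rw [Finset.mem_filter, Finset.mem_product] at hp
      obtain ⟨⟨h1, h2⟩, hadj⟩ := hp
      rw [hSb, Finset.mem_filter] at h1
      obtain ⟨h2A, h2n⟩ := Finset.mem_sdiff.1 h2
      refine Finset.mem_filter.2 ⟨Finset.mem_product.2 ⟨h1.1, h2A⟩, hadj, h1.2.symm, ?_⟩
      intro hc
      exact h2n (by rw [hSb]; exact Finset.mem_filter.2 ⟨h2A, hc.symm⟩)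
    have := Finset.card_le_card hsub
    rw [heq]
    calc (Sb.card : ℝ) ≤ 2 * (((Sb ×ˢ (A \ Sb)).filter (fun p => G.Adj p.1 p.2)).card : ℝ) := hcross
      _ ≤ _ := by
        have : ((((Sb ×ˢ (A \ Sb)).filter (fun p => G.Adj p.1 p.2)).card : ℝ))
            ≤ (((A ×ˢ A).filter (fun q => G.Adj q.1 q.2 ∧ G.Adj q.1 b ∧ ¬ G.Adj q.2 b)).card : ℝ) := by
          exact_mod_cast this
        linarith
  -- bound for a outside F
  have hbound2 : ∀ a ∈ A \ F, ((B.filter (fun z => G.Adj a z)).card : ℝ)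
      ≤ 2 * (((B ×ˢ B).filter
          (fun q => G.Adj q.1 q.2 ∧ G.Adj a q.1 ∧ ¬ G.Adj a q.2)).card : ℝ) := by
    intro a ha
    obtain ⟨haA, han⟩ := Finset.mem_sdiff.1 ha
    set Sa : Finset V := B.filter (fun z => G.Adj a z) with hSa
    have hSaB : Sa ⊆ B := Finset.filter_subset _ _
    have hne : (B \ Sa).Nonempty := by
      rw [hF, Finset.mem_filter] at han
      push_neg at han
      obtain ⟨b, hbB, hnb⟩ := han haA
      exact ⟨b, Finset.mem_sdiff.2 ⟨hbB, fun hc => hnb (Finset.mem_filter.1 hc).2⟩⟩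
    have hcross := cross_bound G B Sa hSaB hne hB
    have hsub : ((Sa ×ˢ (B \ Sa)).filter (fun p => G.Adj p.1 p.2))
        ⊆ ((B ×ˢ B).filter (fun q => G.Adj q.1 q.2 ∧ G.Adj a q.1 ∧ ¬ G.Adj a q.2)) := by
      intro p hp
      rw [Finset.mem_filter, Finset.mem_product] at hp
      obtain ⟨⟨h1, h2⟩, hadj⟩ := hp
      rw [hSa, Finset.mem_filter] at h1
      obtain ⟨h2B, h2n⟩ := Finset.mem_sdiff.1 h2
      refine Finset.mem_filter.2 ⟨Finset.mem_product.2 ⟨h1.1, h2B⟩, hadj, h1.2, ?_⟩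
      intro hc
      exact h2n (by rw [hSa]; exact Finset.mem_filter.2 ⟨h2B, hc⟩)
    have hc2 := Finset.card_le_card hsub
    calc (Sa.card : ℝ) ≤ 2 * (((Sa ×ˢ (B \ Sa)).filter (fun p => G.Adj p.1 p.2)).card : ℝ) := hcross
      _ ≤ _ := by
        have : ((((Sa ×ˢ (B \ Sa)).filter (fun p => G.Adj p.1 p.2)).card : ℝ))
            ≤ (((B ×ˢ B).filter (fun q => G.Adj q.1 q.2 ∧ G.Adj a q.1 ∧ ¬ G.Adj a q.2)).card : ℝ) := by
          exact_mod_cast hc2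
        linarith
  -- Gs has few elements relative to each a ∉ F
  have hGsle : ∀ a ∈ A \ F, (Gs.card : ℝ) ≤ ((B.filter (fun z => G.Adj a z)).card : ℝ) := by
    intro a ha
    have haA : a ∈ A := (Finset.mem_sdiff.1 ha).1
    have : Gs ⊆ B.filter (fun z => G.Adj a z) := by
      intro b hb
      rw [hGs, Finset.mem_filter] at hb
      exact Finset.mem_filter.2 ⟨hb.1, (hb.2 a haA).symm⟩
    exact_mod_cast Finset.card_le_card this
  -- now assemble
  have hmsplit : ∑ b ∈ B, ((A.filter (fun a => G.Adj a b)).card : ℝ)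
      = ∑ b ∈ B \ Gs, ((A.filter (fun a => G.Adj a b)).card : ℝ)
        + ∑ b ∈ Gs, ((A.filter (fun a => G.Adj a b)).card : ℝ) := by
    rw [Finset.sum_sdiff (Finset.filter_subset _ _)]
  have hterm1 : ∑ b ∈ B \ Gs, ((A.filter (fun a => G.Adj a b)).card : ℝ)
      ≤ 2 * ∑ b ∈ B, (((A ×ˢ A).filter
          (fun q => G.Adj q.1 q.2 ∧ G.Adj q.1 b ∧ ¬ G.Adj q.2 b)).card : ℝ) := by
    calc ∑ b ∈ B \ Gs, ((A.filter (fun a => G.Adj a b)).card : ℝ)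
        ≤ ∑ b ∈ B \ Gs, 2 * (((A ×ˢ A).filter
            (fun q => G.Adj q.1 q.2 ∧ G.Adj q.1 b ∧ ¬ G.Adj q.2 b)).card : ℝ) :=
          Finset.sum_le_sum hbound1
      _ ≤ ∑ b ∈ B, 2 * (((A ×ˢ A).filter
            (fun q => G.Adj q.1 q.2 ∧ G.Adj q.1 b ∧ ¬ G.Adj q.2 b)).card : ℝ) := by
          apply Finset.sum_le_sum_of_subset_of_nonneg (Finset.sdiff_subset)
          intro b _ _; positivity
      _ = _ := by rw [Finset.mul_sum]
  have hterm2 : ∑ b ∈ Gs, ((A.filter (fun a => G.Adj a b)).card : ℝ)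
      ≤ 4 * ∑ a ∈ A, (((B ×ˢ B).filter
          (fun q => G.Adj q.1 q.2 ∧ G.Adj a q.1 ∧ ¬ G.Adj a q.2)).card : ℝ) := by
    have step1 : ∑ b ∈ Gs, ((A.filter (fun a => G.Adj a b)).card : ℝ)
        ≤ (Gs.card : ℝ) * (A.card : ℝ) := by
      calc ∑ b ∈ Gs, ((A.filter (fun a => G.Adj a b)).card : ℝ)
          ≤ ∑ _b ∈ Gs, (A.card : ℝ) := by
            apply Finset.sum_le_sum
            intro b _
            exact_mod_cast Finset.card_le_card (Finset.filter_subset _ _)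
        _ = (Gs.card : ℝ) * (A.card : ℝ) := by rw [Finset.sum_const, nsmul_eq_mul]
    have step2 : (Gs.card : ℝ) * (A.card : ℝ) ≤ 2 * ∑ a ∈ A \ F, (Gs.card : ℝ) := by
      rw [Finset.sum_const, nsmul_eq_mul]
      have h0 : (0:ℝ) ≤ (Gs.card : ℝ) := by positivity
      nlinarith [hAF']
    have step3 : ∑ a ∈ A \ F, (Gs.card : ℝ)
        ≤ ∑ a ∈ A \ F, 2 * (((B ×ˢ B).filter
            (fun q => G.Adj q.1 q.2 ∧ G.Adj a q.1 ∧ ¬ G.Adj a q.2)).card : ℝ) := by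
      apply Finset.sum_le_sum
      intro a ha
      exact le_trans (hGsle a ha) (hbound2 a ha)
    have step4 : ∑ a ∈ A \ F, 2 * (((B ×ˢ B).filter
            (fun q => G.Adj q.1 q.2 ∧ G.Adj a q.1 ∧ ¬ G.Adj a q.2)).card : ℝ)
        ≤ ∑ a ∈ A, 2 * (((B ×ˢ B).filter
            (fun q => G.Adj q.1 q.2 ∧ G.Adj a q.1 ∧ ¬ G.Adj a q.2)).card : ℝ) := by
      apply Finset.sum_le_sum_of_subset_of_nonneg (Finset.sdiff_subset)
      intro a _ _; positivity
    calc ∑ b ∈ Gs, ((A.filter (fun a => G.Adj a b)).card : ℝ)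
        ≤ (Gs.card : ℝ) * (A.card : ℝ) := step1
      _ ≤ 2 * ∑ a ∈ A \ F, (Gs.card : ℝ) := step2
      _ ≤ 2 * ∑ a ∈ A, 2 * (((B ×ˢ B).filter
            (fun q => G.Adj q.1 q.2 ∧ G.Adj a q.1 ∧ ¬ G.Adj a q.2)).card : ℝ) := by
          have := le_trans step3 step4
          linarith
      _ = _ := by rw [← Finset.mul_sum]; ring
  have hmcast : (((A ×ˢ B).filter (fun p => G.Adj p.1 p.2)).card : ℝ)
      = ∑ b ∈ B, ((A.filter (fun a => G.Adj a b)).card : ℝ) := by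
    rw [hm]; push_cast; ring
  rw [hmcast, hmsplit]
  linarith

private lemma tri1 {V : Type*} [DecidableEq V] (G : SimpleGraph V) [DecidableRel G.Adj]
    (X Y : Finset V) :
    ((X ×ˢ X ×ˢ Y).filter (fun t =>
        G.Adj t.1 t.2.1 ∧ G.Adj t.1 t.2.2 ∧ ¬ G.Adj t.2.1 t.2.2)).card
    = ∑ y ∈ Y, ((X ×ˢ X).filter
        (fun q => G.Adj q.1 q.2 ∧ G.Adj q.1 y ∧ ¬ G.Adj q.2 y)).card := by
  calc ((X ×ˢ X ×ˢ Y).filter (fun t =>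
        G.Adj t.1 t.2.1 ∧ G.Adj t.1 t.2.2 ∧ ¬ G.Adj t.2.1 t.2.2)).card
      = ∑ x ∈ X, ∑ y ∈ Y, (X.filter
          (fun x' => G.Adj x x' ∧ G.Adj x y ∧ ¬ G.Adj x' y)).card := by
        rw [card_filter_prod X (X ×ˢ Y)
          (fun t => G.Adj t.1 t.2.1 ∧ G.Adj t.1 t.2.2 ∧ ¬ G.Adj t.2.1 t.2.2)]
        exact Finset.sum_congr rfl fun x _ => card_filter_prod' X Y
          (fun q => G.Adj x q.1 ∧ G.Adj x q.2 ∧ ¬ G.Adj q.1 q.2)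
    _ = ∑ y ∈ Y, ∑ x ∈ X, (X.filter
          (fun x' => G.Adj x x' ∧ G.Adj x y ∧ ¬ G.Adj x' y)).card := by
        rw [Finset.sum_comm]
    _ = _ := Finset.sum_congr rfl fun y _ =>
      (card_filter_prod X X (fun q => G.Adj q.1 q.2 ∧ G.Adj q.1 y ∧ ¬ G.Adj q.2 y)).symm

private lemma tri2 {V : Type*} [DecidableEq V] (G : SimpleGraph V) [DecidableRel G.Adj]
    (X Y : Finset V) :
    ((X ×ˢ Y ×ˢ Y).filter (fun t =>
        G.Adj t.2.1 t.2.2 ∧ G.Adj t.1 t.2.1 ∧ ¬ G.Adj t.1 t.2.2)).card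
    = ∑ x ∈ X, ((Y ×ˢ Y).filter
        (fun q => G.Adj q.1 q.2 ∧ G.Adj x q.1 ∧ ¬ G.Adj x q.2)).card :=
  card_filter_prod _ _ _

private lemma edges_swap {V : Type*} [DecidableEq V] (G : SimpleGraph V) [DecidableRel G.Adj]
    (X Y : Finset V) :
    ((Y ×ˢ X).filter (fun p => G.Adj p.1 p.2)).card
    = ((X ×ˢ Y).filter (fun p => G.Adj p.1 p.2)).card := by
  rw [card_filter_prod' (p := fun p : V × V => G.Adj p.1 p.2),
    card_filter_prod (p := fun p : V × V => G.Adj p.1 p.2)]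
  refine Finset.sum_congr rfl fun x _ => ?_
  congr 1
  apply Finset.filter_congr
  intro y _
  exact ⟨fun h => h.symm, fun h => h.symm⟩

/-- If `X` and `Y` are disjoint, each internally half-connected, and not highly connected,
then the number of edges between `X` and `Y` is at most `4` times the number of bad triangles
of the two displayed forms. -/
theorem edges_between_le_four_badTriangles {V : Type*} [DecidableEq V] (G : SimpleGraph V)
    [DecidableRel G.Adj] (X Y : Finset V) (hdisj : Disjoint X Y)
    (hX : ∀ x ∈ X, ((X.card : ℝ) / 2 ≤ ((X.filter (fun y => G.Adj x y)).card : ℝ)))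
    (hY : ∀ y ∈ Y, ((Y.card : ℝ) / 2 ≤ ((Y.filter (fun z => G.Adj y z)).card : ℝ)))
    (hnhc : ¬ ((∀ x ∈ X, ((Y.card : ℝ) / 2 ≤ ((Y.filter (fun y => G.Adj x y)).card : ℝ))) ∧
               (∀ y ∈ Y, ((X.card : ℝ) / 2 ≤ ((X.filter (fun x => G.Adj y x)).card : ℝ))))) :
    ((X ×ˢ Y).filter (fun p => G.Adj p.1 p.2)).card ≤
      4 * (((X ×ˢ X ×ˢ Y).filter (fun t =>
              G.Adj t.1 t.2.1 ∧ G.Adj t.1 t.2.2 ∧ ¬ G.Adj t.2.1 t.2.2)).card +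
           ((X ×ˢ Y ×ˢ Y).filter (fun t =>
              G.Adj t.2.1 t.2.2 ∧ G.Adj t.1 t.2.1 ∧ ¬ G.Adj t.1 t.2.2)).card) := by
  rw [not_and_or] at hnhc
  have goalR : (((X ×ˢ Y).filter (fun p => G.Adj p.1 p.2)).card : ℝ) ≤
      4 * (((((X ×ˢ X ×ˢ Y).filter (fun t =>
              G.Adj t.1 t.2.1 ∧ G.Adj t.1 t.2.2 ∧ ¬ G.Adj t.2.1 t.2.2)).card : ℝ)) +
           ((((X ×ˢ Y ×ˢ Y).filter (fun t =>
              G.Adj t.2.1 t.2.2 ∧ G.Adj t.1 t.2.1 ∧ ¬ G.Adj t.1 t.2.2)).card : ℝ))) := by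
    have hT1 : (((X ×ˢ X ×ˢ Y).filter (fun t =>
          G.Adj t.1 t.2.1 ∧ G.Adj t.1 t.2.2 ∧ ¬ G.Adj t.2.1 t.2.2)).card : ℝ)
        = ∑ y ∈ Y, (((X ×ˢ X).filter
            (fun q => G.Adj q.1 q.2 ∧ G.Adj q.1 y ∧ ¬ G.Adj q.2 y)).card : ℝ) := by
      rw [tri1]; push_cast; ring
    have hT2 : (((X ×ˢ Y ×ˢ Y).filter (fun t =>
          G.Adj t.2.1 t.2.2 ∧ G.Adj t.1 t.2.1 ∧ ¬ G.Adj t.1 t.2.2)).card : ℝ)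
        = ∑ x ∈ X, (((Y ×ˢ Y).filter
            (fun q => G.Adj q.1 q.2 ∧ G.Adj x q.1 ∧ ¬ G.Adj x q.2)).card : ℝ) := by
      rw [tri2]; push_cast; ring
    rcases hnhc with hbad | hbad
    · -- bad x₀ : apply core with A := Y, B := X
      push_neg at hbad
      have hcore := core G Y X hY hX hbad
      rw [edges_swap] at hcore
      have e1 : ∑ b ∈ X, (((Y ×ˢ Y).filter
            (fun q => G.Adj q.1 q.2 ∧ G.Adj q.1 b ∧ ¬ G.Adj q.2 b)).card : ℝ)
          = ∑ x ∈ X, (((Y ×ˢ Y).filter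
            (fun q => G.Adj q.1 q.2 ∧ G.Adj x q.1 ∧ ¬ G.Adj x q.2)).card : ℝ) := by
        refine Finset.sum_congr rfl fun x _ => ?_
        congr 2
        apply Finset.filter_congr
        intro q _
        constructor
        · rintro ⟨h1, h2, h3⟩; exact ⟨h1, h2.symm, fun hc => h3 hc.symm⟩
        · rintro ⟨h1, h2, h3⟩; exact ⟨h1, h2.symm, fun hc => h3 hc.symm⟩
      have e2 : ∑ a ∈ Y, (((X ×ˢ X).filter
            (fun q => G.Adj q.1 q.2 ∧ G.Adj a q.1 ∧ ¬ G.Adj a q.2)).card : ℝ)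
          = ∑ y ∈ Y, (((X ×ˢ X).filter
            (fun q => G.Adj q.1 q.2 ∧ G.Adj q.1 y ∧ ¬ G.Adj q.2 y)).card : ℝ) := by
        refine Finset.sum_congr rfl fun y _ => ?_
        congr 2
        apply Finset.filter_congr
        intro q _
        constructor
        · rintro ⟨h1, h2, h3⟩; exact ⟨h1, h2.symm, fun hc => h3 hc.symm⟩
        · rintro ⟨h1, h2, h3⟩; exact ⟨h1, h2.symm, fun hc => h3 hc.symm⟩
      rw [e1, e2] at hcore
      rw [hT1, hT2]
      linarith
    · -- bad y₀ : apply core with A := X, B := Y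
      push_neg at hbad
      have hcore := core G X Y hX hY hbad
      rw [hT1, hT2]
      linarith
  exact_mod_cast goalR
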